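/- The surface X(u,v) from the previous statement satisfies |X₁(u,v)|² = 1 for all (u,v), i.e., its projection to ℝ⁵ lies in the unit sphere S⁴. -/
import Mathlib
set_option maxHeartbeats 1000000


open scoped RealInnerProductSpace

/-- For the surface
`X(u,v) = (1/a)(C₃ + sinθ(D₁cos(au) + D₂sin(au))) + (u cosθ + b)ξ + (1/κ)(C₁(cos v - 1) + C₂ sin v)`
in `ℝ⁶ = ℝ⁵ × ℝ`, with `a = √(1+sin²θ)`, `κ = √(1+4h²+sin²θ)`, `C₁, C₂, D₁, D₂, ξ` orthonormal,
`C₃` a unit vector with `⟨C₃,C₁⟩ = a/κ` orthogonal to `C₂, ξ, D₁, D₂`,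
the projection `X₁ = X - ⟨X,ξ⟩ξ` to `ℝ⁵` satisfies `|X₁(u,v)|² = 1` for all `(u,v)`,
i.e. it lies in the unit sphere `S⁴`. -/
theorem stmt_8 (θ b h : ℝ) (hθ : θ ∈ Set.Ioo 0 (Real.pi / 2)) (hh : 0 < h)
    (C₁ C₂ C₃ D₁ D₂ ξ : EuclideanSpace ℝ (Fin 6))
    (hC₁ : ‖C₁‖ = 1) (hC₂ : ‖C₂‖ = 1) (hC₃ : ‖C₃‖ = 1)
    (hD₁ : ‖D₁‖ = 1) (hD₂ : ‖D₂‖ = 1) (hξ : ‖ξ‖ = 1)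
    (o1 : ⟪C₁, C₂⟫ = 0) (o2 : ⟪C₁, D₁⟫ = 0) (o3 : ⟪C₁, D₂⟫ = 0) (o4 : ⟪C₁, ξ⟫ = 0)
    (o5 : ⟪C₂, D₁⟫ = 0) (o6 : ⟪C₂, D₂⟫ = 0) (o7 : ⟪C₂, ξ⟫ = 0)
    (o8 : ⟪D₁, D₂⟫ = 0) (o9 : ⟪D₁, ξ⟫ = 0) (o10 : ⟪D₂, ξ⟫ = 0)
    (a κ : ℝ) (ha : a = Real.sqrt (1 + Real.sin θ ^ 2))
    (hκ : κ = Real.sqrt (1 + 4 * h ^ 2 + Real.sin θ ^ 2))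
    (p1 : ⟪C₃, C₁⟫ = a / κ) (p2 : ⟪C₃, C₂⟫ = 0) (p3 : ⟪C₃, ξ⟫ = 0)
    (p4 : ⟪C₃, D₁⟫ = 0) (p5 : ⟪C₃, D₂⟫ = 0)
    (X : ℝ → ℝ → EuclideanSpace ℝ (Fin 6))
    (hX : X = fun u v =>
      a⁻¹ • (C₃ + Real.sin θ • (Real.cos (a * u) • D₁ + Real.sin (a * u) • D₂))
      + (u * Real.cos θ + b) • ξ
      + κ⁻¹ • ((Real.cos v - 1) • C₁ + Real.sin v • C₂))
    (X₁ : ℝ → ℝ → EuclideanSpace ℝ (Fin 6))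
    (hX₁ : X₁ = fun u v => X u v - ⟪X u v, ξ⟫ • ξ)
 :
    ∀ u v : ℝ, ‖X₁ u v‖ ^ 2 = 1 := by

  intro u v
  have ha2 : a ^ 2 = 1 + Real.sin θ ^ 2 := by
    rw [ha, Real.sq_sqrt]; positivity
  have hκ2 : κ ^ 2 = 1 + 4 * h ^ 2 + Real.sin θ ^ 2 := by
    rw [hκ, Real.sq_sqrt]; positivity
  have hapos : (0:ℝ) < a := by rw [ha]; positivity
  have hκpos : (0:ℝ) < κ := by rw [hκ]; positivity
  have i1 : ⟪C₁, C₁⟫ = 1 := by rw [real_inner_self_eq_norm_sq, hC₁]; norm_num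
  have i2 : ⟪C₂, C₂⟫ = 1 := by rw [real_inner_self_eq_norm_sq, hC₂]; norm_num
  have i3 : ⟪C₃, C₃⟫ = 1 := by rw [real_inner_self_eq_norm_sq, hC₃]; norm_num
  have i4 : ⟪D₁, D₁⟫ = 1 := by rw [real_inner_self_eq_norm_sq, hD₁]; norm_num
  have i5 : ⟪D₂, D₂⟫ = 1 := by rw [real_inner_self_eq_norm_sq, hD₂]; norm_num
  have i6 : ⟪ξ, ξ⟫ = 1 := by rw [real_inner_self_eq_norm_sq, hξ]; norm_num
  have o1' : ⟪C₂, C₁⟫ = 0 := by rw [real_inner_comm]; exact o1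
  have o2' : ⟪D₁, C₁⟫ = 0 := by rw [real_inner_comm]; exact o2
  have o3' : ⟪D₂, C₁⟫ = 0 := by rw [real_inner_comm]; exact o3
  have o4' : ⟪ξ, C₁⟫ = 0 := by rw [real_inner_comm]; exact o4
  have o5' : ⟪D₁, C₂⟫ = 0 := by rw [real_inner_comm]; exact o5
  have o6' : ⟪D₂, C₂⟫ = 0 := by rw [real_inner_comm]; exact o6
  have o7' : ⟪ξ, C₂⟫ = 0 := by rw [real_inner_comm]; exact o7
  have o8' : ⟪D₂, D₁⟫ = 0 := by rw [real_inner_comm]; exact o8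
  have o9' : ⟪ξ, D₁⟫ = 0 := by rw [real_inner_comm]; exact o9
  have o10' : ⟪ξ, D₂⟫ = 0 := by rw [real_inner_comm]; exact o10
  have p1' : ⟪C₁, C₃⟫ = a / κ := by rw [real_inner_comm]; exact p1
  have p2' : ⟪C₂, C₃⟫ = 0 := by rw [real_inner_comm]; exact p2
  have p3' : ⟪ξ, C₃⟫ = 0 := by rw [real_inner_comm]; exact p3
  have p4' : ⟪D₁, C₃⟫ = 0 := by rw [real_inner_comm]; exact p4
  have p5' : ⟪D₂, C₃⟫ = 0 := by rw [real_inner_comm]; exact p5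
  subst hX hX₁
  rw [← real_inner_self_eq_norm_sq]
  simp only [inner_sub_left, inner_sub_right, inner_add_left, inner_add_right,
    real_inner_smul_left, real_inner_smul_right, i1, i2, i3, i4, i5, i6,
    o1, o2, o3, o4, o5, o6, o7, o8, o9, o10,
    o1', o2', o3', o4', o5', o6', o7', o8', o9', o10',
    p1, p2, p3, p4, p5, p1', p2', p3', p4', p5']
  have hcu := Real.sin_sq_add_cos_sq (a * u)
  have hcv := Real.sin_sq_add_cos_sq v
  have hane : a ≠ 0 := ne_of_gt hapos
  have hκne : κ ≠ 0 := ne_of_gt hκpos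
  have e1 : a * a⁻¹ = 1 := mul_inv_cancel₀ hane
  have f : a⁻¹ ^ 2 * (1 + Real.sin θ ^ 2) = 1 := by
    rw [← ha2]; field_simp
  linear_combination a⁻¹ ^ 2 * Real.sin θ ^ 2 * hcu + κ⁻¹ ^ 2 * hcv
    + (2 * κ⁻¹ ^ 2 * (Real.cos v - 1)) * e1 + f
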